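/- Let Q be a cycle in a graph, r ≥ 4, and let (Z1, Z2) be a nontrivial (Q,r)-scheme with |Z1| + |Z2| ≥ 4. Then |Q| ≥ 2(|Z1| + |Z2|) + 2r − 8. -/

import Mathlib

open Finset

/-- minimal forward gap from `x` to another point of `P` -/
noncomputable def gp (n : ℕ) (P : Finset (ZMod n)) (x : ZMod n) : ℕ :=
  sInf ((fun y => (y - x).val) '' (P.erase x : Set (ZMod n)))

section
variable {n : ℕ} [NeZero n] {P : Finset (ZMod n)}

omit [NeZero n] in
lemma erase_ne (h2 : 2 ≤ P.card) (x : ZMod n) : (P.erase x).Nonempty := by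
  rw [← Finset.card_pos, Finset.card_erase_eq_ite]
  split <;> omega

omit [NeZero n] in
lemma gp_le {x y : ZMod n} (hy : y ∈ P) (hxy : y ≠ x) : gp n P x ≤ (y - x).val :=
  Nat.sInf_le ⟨y, Finset.mem_coe.mpr (Finset.mem_erase.mpr ⟨hxy, hy⟩), rfl⟩

omit [NeZero n] in
lemma exists_gp (h2 : 2 ≤ P.card) (x : ZMod n) :
    ∃ y ∈ P, y ≠ x ∧ (y - x).val = gp n P x := by
  have hne : ((fun y => (y - x).val) '' (P.erase x : Set (ZMod n))).Nonempty := by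
    obtain ⟨y, hy⟩ := erase_ne h2 x
    exact ⟨_, y, hy, rfl⟩
  obtain ⟨y, hy, hval⟩ := Nat.sInf_mem hne
  simp only [Finset.coe_erase, Set.mem_diff, Finset.mem_coe, Set.mem_singleton_iff] at hy
  exact ⟨y, hy.1, hy.2, hval⟩

omit [NeZero n] in
lemma gp_pos (h2 : 2 ≤ P.card) (x : ZMod n) : 1 ≤ gp n P x := by
  obtain ⟨y, _, hne, hval⟩ := exists_gp h2 x
  rcases Nat.eq_zero_or_pos (gp n P x) with h | h
  · rw [h] at hval
    exact absurd (sub_eq_zero.mp ((ZMod.val_eq_zero _).mp hval)) hne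
  · exact h

lemma gp_lt (h2 : 2 ≤ P.card) (x : ZMod n) : gp n P x < n := by
  obtain ⟨y, _, _, hval⟩ := exists_gp h2 x
  rw [← hval]; exact ZMod.val_lt _

/-- the successor of `x` in `P` -/
noncomputable def nxt (n : ℕ) (P : Finset (ZMod n)) (x : ZMod n) : ZMod n :=
  x + (gp n P x : ZMod n)

lemma nxt_spec (h2 : 2 ≤ P.card) (x : ZMod n) :
    nxt n P x ∈ P ∧ nxt n P x ≠ x ∧ (nxt n P x - x).val = gp n P x := by
  obtain ⟨y, hy, hne, hval⟩ := exists_gp h2 x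
  have : nxt n P x = y := by
    rw [nxt, ← hval, ZMod.natCast_rightInverse (y - x)]; ring
  rw [this]; exact ⟨hy, hne, hval⟩

/-- difference of vals along an arc -/
lemma val_sub_of_le {a x y : ZMod n} (h : (x - a).val ≤ (y - a).val) :
    (y - x).val = (y - a).val - (x - a).val := by
  have hy : y - x = (((y - a).val - (x - a).val : ℕ) : ZMod n) := by
    rw [Nat.cast_sub h, ZMod.natCast_rightInverse (y - a), ZMod.natCast_rightInverse (x - a)]
    ring
  rw [hy, ZMod.val_natCast, Nat.mod_eq_of_lt (lt_of_le_of_lt (Nat.sub_le _ _) (ZMod.val_lt _))]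

lemma val_inj_base {a x y : ZMod n} (h : (x - a).val = (y - a).val) : x = y := by
  have hx : x = a + (((x - a).val : ℕ) : ZMod n) := by
    rw [ZMod.natCast_rightInverse (x - a)]; ring
  have hy : y = a + (((y - a).val : ℕ) : ZMod n) := by
    rw [ZMod.natCast_rightInverse (y - a)]; ring
  rw [hx, hy, h]

/-- key counting step: if two points of P are shifted by small amounts and meet, contradiction -/
lemma shift_clash (h2 : 2 ≤ P.card) {x y : ZMod n} (hx : x ∈ P) (hy : y ∈ P) (hxy : x ≠ y)
    {i j : ℕ} (hi : i < gp n P x) (hj : j < gp n P y)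
    (heq : x + (i : ZMod n) = y + (j : ZMod n)) : False := by
  rcases le_total i j with h | h
  · have hsub : x - y = ((j - i : ℕ) : ZMod n) := by
      rw [Nat.cast_sub h]
      linear_combination heq
    have hval : (x - y).val = j - i := by
      rw [hsub, ZMod.val_natCast,
        Nat.mod_eq_of_lt (lt_of_le_of_lt (Nat.sub_le _ _) (lt_trans hj (gp_lt h2 y)))]
    have hgl := gp_le hx hxy
    omega
  · have hsub : y - x = ((i - j : ℕ) : ZMod n) := by
      rw [Nat.cast_sub h]
      linear_combination -heq
    have hval : (y - x).val = i - j := by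
      rw [hsub, ZMod.val_natCast,
        Nat.mod_eq_of_lt (lt_of_le_of_lt (Nat.sub_le _ _) (lt_trans hi (gp_lt h2 x)))]
    have hgl := gp_le hy hxy.symm
    omega

lemma sum_gp_le (h2 : 2 ≤ P.card) : ∑ x ∈ P, gp n P x ≤ n := by
  classical
  set I : ZMod n → Finset (ZMod n) :=
    fun x => (Finset.range (gp n P x)).image (fun i : ℕ => x + (i : ZMod n)) with hI
  have key : ∀ x ∈ P, ∀ y ∈ P, x ≠ y → Disjoint (I x) (I y) := by
    intro x hx y hy hxy
    rw [Finset.disjoint_left]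
    rintro z hz hz'
    simp only [hI, Finset.mem_image, Finset.mem_range] at hz hz'
    obtain ⟨i, hi, rfl⟩ := hz
    obtain ⟨j, hj, hij⟩ := hz'
    exact shift_clash h2 hx hy hxy hi hj hij.symm
  have hcard : ∑ x ∈ P, gp n P x = (P.biUnion I).card := by
    rw [Finset.card_biUnion key]
    refine Finset.sum_congr rfl fun x hx => ?_
    rw [hI, Finset.card_image_of_injOn, Finset.card_range]
    intro i hi j hj hij
    simp only [Finset.coe_range, Set.mem_Iio] at hi hj
    have hi' : ((i : ZMod n)).val = i := by
      rw [ZMod.val_natCast, Nat.mod_eq_of_lt (lt_trans hi (gp_lt h2 x))]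
    have hj' : ((j : ZMod n)).val = j := by
      rw [ZMod.val_natCast, Nat.mod_eq_of_lt (lt_trans hj (gp_lt h2 x))]
    have : ((i : ZMod n)) = (j : ZMod n) := by
      have := congrArg (· - x) hij
      simpa using this
    rw [← hi', ← hj', this]
  rw [hcard]
  calc _ ≤ Fintype.card (ZMod n) := Finset.card_le_univ _
    _ = n := ZMod.card n

end

section
variable {n : ℕ} [NeZero n] {P : Finset (ZMod n)}

lemma nxt_inj (h2 : 2 ≤ P.card) {x y : ZMod n} (hx : x ∈ P) (hy : y ∈ P) (hxy : x ≠ y) :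
    nxt n P x ≠ nxt n P y := by
  intro heq
  rw [nxt, nxt] at heq
  rcases le_total (gp n P y) (gp n P x) with h | h
  · have hsub : y - x = ((gp n P x - gp n P y : ℕ) : ZMod n) := by
      rw [Nat.cast_sub h]
      linear_combination -heq
    have hval : (y - x).val = gp n P x - gp n P y := by
      rw [hsub, ZMod.val_natCast,
        Nat.mod_eq_of_lt (lt_of_le_of_lt (Nat.sub_le _ _) (gp_lt h2 x))]
    have hgl := gp_le hy hxy.symm
    have hp := gp_pos h2 y
    omega
  · have hsub : x - y = ((gp n P y - gp n P x : ℕ) : ZMod n) := by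
      rw [Nat.cast_sub h]
      linear_combination heq
    have hval : (x - y).val = gp n P y - gp n P x := by
      rw [hsub, ZMod.val_natCast,
        Nat.mod_eq_of_lt (lt_of_le_of_lt (Nat.sub_le _ _) (gp_lt h2 y))]
    have hgl := gp_le hx hxy
    have hp := gp_pos h2 x
    omega

lemma nxt_surj (h2 : 2 ≤ P.card) : ∀ c ∈ P, ∃ p ∈ P, nxt n P p = c := by
  intro c hc
  obtain ⟨p, hp, hpc⟩ := Finset.surj_on_of_inj_on_of_card_le (s := P) (t := P)
    (fun a _ => nxt n P a) (fun a ha => (nxt_spec h2 a).1)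
    (fun a₁ a₂ ha₁ ha₂ h => by
      by_contra hne; exact nxt_inj h2 ha₁ ha₂ hne h)
    le_rfl c hc
  exact ⟨p, hp, hpc.symm⟩

lemma exists_trans (h2 : 2 ≤ P.card) {Z W : Finset (ZMod n)} (hZ : Z ⊆ P) (hW : W ⊆ P)
    (hPZW : ∀ x ∈ P, x ∈ Z ∨ x ∈ W) (hd : Disjoint Z W) {a0 b0 : ZMod n}
    (ha0 : a0 ∈ Z) (hb0 : b0 ∈ W) : ∃ a ∈ Z, nxt n P a ∈ W := by
  classical
  have hb0a0 : b0 ≠ a0 := fun h => Finset.disjoint_left.mp hd (h ▸ ha0) hb0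
  have hb0pos : 1 ≤ (b0 - a0).val := by
    rcases Nat.eq_zero_or_pos (b0 - a0).val with h | h
    · exact absurd (sub_eq_zero.mp ((ZMod.val_eq_zero _).mp h)) hb0a0
    · exact h
  set S := Z.filter (fun x => (x - a0).val < (b0 - a0).val) with hS
  have ha0S : a0 ∈ S := by
    refine Finset.mem_filter.mpr ⟨ha0, ?_⟩
    simpa using sub_ne_zero.mpr hb0a0
  obtain ⟨a, haS, hmax⟩ := S.exists_max_image (fun x => (x - a0).val) ⟨a0, ha0S⟩
  obtain ⟨haZ, haf⟩ := Finset.mem_filter.mp haS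
  have haP : a ∈ P := hZ haZ
  obtain ⟨hyP, hyne, hval⟩ := nxt_spec h2 a
  set y := nxt n P a with hy
  have hb0a : b0 ≠ a := fun h => Finset.disjoint_left.mp hd (h ▸ haZ) hb0
  have hga : gp n P a ≤ (b0 - a).val := gp_le (hW hb0) hb0a
  have hsub : (b0 - a).val = (b0 - a0).val - (a - a0).val :=
    val_sub_of_le (le_of_lt haf)
  have hfy : (y - a0).val = (a - a0).val + gp n P a := by
    have hyeq : y - a0 = (((a - a0).val + gp n P a : ℕ) : ZMod n) := by
      push_cast
      rw [ZMod.natCast_rightInverse (a - a0), hy, nxt]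
      ring
    rw [hyeq, ZMod.val_natCast, Nat.mod_eq_of_lt]
    have := ZMod.val_lt (b0 - a0)
    omega
  have hfyle : (y - a0).val ≤ (b0 - a0).val := by omega
  have hgpos := gp_pos h2 a
  rcases hPZW y hyP with hyZ | hyW
  · rcases lt_or_eq_of_le hfyle with hlt | heqv
    · have hyS : y ∈ S := Finset.mem_filter.mpr ⟨hyZ, hlt⟩
      have := hmax y hyS
      omega
    · have : y = b0 := val_inj_base heqv
      exact absurd (this ▸ hyZ) (Finset.disjoint_right.mp hd hb0)
  · exact ⟨a, haZ, hyW⟩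

end


/-- Arc condition within one set of a `(Q,r)`-scheme: the cycle `Q` is modeled as `ZMod n`
(vertices `0,…,n-1` in the chosen orientation), and the arc from `x` to `y` in the chosen
direction has length `(y - x).val`.  Within one `Zᵢ`, arcs between distinct vertices have
length at least `2`. -/
def ArcWithin (n : ℕ) (Z : Finset (ZMod n)) : Prop :=
  ∀ x ∈ Z, ∀ y ∈ Z, x ≠ y → 2 ≤ (y - x).val

/-- Arc condition between two different sets of a `(Q,r)`-scheme: arcs between distinct
vertices of different sets have length at least `r` (applied in both orders, this gives
both directions). -/
def ArcBetween (n r : ℕ) (Z W : Finset (ZMod n)) : Prop :=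
  ∀ x ∈ Z, ∀ y ∈ W, x ≠ y → r ≤ (y - x).val

theorem stmt5 (n r : ℕ) (hn : 3 ≤ n) (hr : 2 ≤ r)
    (Z1 Z2 : Finset (ZMod n))
    (h1 : ArcWithin n Z1) (h2 : ArcWithin n Z2)
    (h12 : ArcBetween n r Z1 Z2) (h21 : ArcBetween n r Z2 Z1)
    (hnontriv : ∃ z1 ∈ Z1, ∃ z2 ∈ Z2, z1 ≠ z2)
    (hr4 : 4 ≤ r) (hcard : 4 ≤ Z1.card + Z2.card)
    : 2 * ((Z1.card : ℤ) + Z2.card) + 2 * r - 8 ≤ (n : ℤ) := by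
  classical
  haveI : NeZero n := ⟨by omega⟩
  set P : Finset (ZMod n) := Z1 ∪ Z2 with hP
  set C : Finset (ZMod n) := Z1 ∩ Z2 with hC
  have hmk : P.card + C.card = Z1.card + Z2.card := Finset.card_union_add_card_inter _ _
  have hm2 : 2 ≤ P.card := by
    have h1c : Z1.card ≤ P.card := Finset.card_le_card Finset.subset_union_left
    have h2c : Z2.card ≤ P.card := Finset.card_le_card Finset.subset_union_right
    omega
  have hgap2 : ∀ x ∈ P, 2 ≤ gp n P x := by
    intro x hx
    obtain ⟨y, hyP, hyne, hval⟩ := exists_gp hm2 x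
    rw [← hval]
    rcases Finset.mem_union.mp hx with hx1 | hx2 <;>
      rcases Finset.mem_union.mp hyP with hy1 | hy2
    · exact h1 x hx1 y hy1 (Ne.symm hyne)
    · exact le_trans hr (h12 x hx1 y hy2 (Ne.symm hyne))
    · exact le_trans hr (h21 x hx2 y hy1 (Ne.symm hyne))
    · exact h2 x hx2 y hy2 (Ne.symm hyne)
  set T : Finset (ZMod n) := P.filter (fun x => r ≤ gp n P x) with hT
  -- predecessors of C points are special
  have hto : ∀ p ∈ P, nxt n P p ∈ C → r ≤ gp n P p := by
    intro p hp hc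
    obtain ⟨hyP, hyne, hval⟩ := nxt_spec hm2 p
    rw [← hval]
    rcases Finset.mem_union.mp hp with h | h
    · exact h12 p h _ (Finset.mem_inter.mp hc).2 (Ne.symm hyne)
    · exact h21 p h _ (Finset.mem_inter.mp hc).1 (Ne.symm hyne)
  have hCT : C ⊆ T := by
    intro c hc
    obtain ⟨hc1, hc2⟩ := Finset.mem_inter.mp hc
    refine Finset.mem_filter.mpr ⟨Finset.mem_union_left _ hc1, ?_⟩
    obtain ⟨hyP, hyne, hval⟩ := nxt_spec hm2 c
    rw [← hval]
    rcases Finset.mem_union.mp hyP with h | h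
    · exact h21 c hc2 _ h (Ne.symm hyne)
    · exact h12 c hc1 _ h (Ne.symm hyne)
  have hT2 : 2 ≤ T.card := by
    rcases C.eq_empty_or_nonempty with hCe | ⟨c, hc⟩
    · obtain ⟨z1, hz1, z2, hz2, hne⟩ := hnontriv
      have hd : Disjoint Z1 Z2 := Finset.disjoint_iff_inter_eq_empty.mpr hCe
      obtain ⟨a, haZ, haW⟩ := exists_trans hm2 (Finset.subset_union_left)
        (Finset.subset_union_right) (fun x hx => Finset.mem_union.mp hx) hd hz1 hz2
      obtain ⟨b, hbZ, hbW⟩ := exists_trans (P := P) hm2 (Finset.subset_union_right)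
        (Finset.subset_union_left) (fun x hx => (Finset.mem_union.mp hx).symm) hd.symm hz2 hz1
      have haT : a ∈ T := by
        refine Finset.mem_filter.mpr ⟨Finset.mem_union_left _ haZ, ?_⟩
        obtain ⟨hyP, hyne, hval⟩ := nxt_spec hm2 a
        rw [← hval]
        exact h12 a haZ _ haW (Ne.symm hyne)
      have hbT : b ∈ T := by
        refine Finset.mem_filter.mpr ⟨Finset.mem_union_right _ hbZ, ?_⟩
        obtain ⟨hyP, hyne, hval⟩ := nxt_spec hm2 b
        rw [← hval]
        exact h21 b hbZ _ hbW (Ne.symm hyne)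
      have hab : a ≠ b := fun h => Finset.disjoint_left.mp hd haZ (h ▸ hbZ)
      exact Finset.one_lt_card.mpr ⟨a, haT, b, hbT, hab⟩
    · have hcP : c ∈ P := Finset.mem_union_left _ (Finset.mem_inter.mp hc).1
      obtain ⟨p, hp, hpc⟩ := nxt_surj hm2 c hcP
      have hpT : p ∈ T := Finset.mem_filter.mpr ⟨hp, hto p hp (hpc ▸ hc)⟩
      have hpc' : p ≠ c := by
        intro h
        exact (nxt_spec hm2 p).2.1 (by rw [hpc, h])
      exact Finset.one_lt_card.mpr ⟨p, hpT, c, hCT hc, hpc'⟩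
  have hsum := sum_gp_le (n := n) (P := P) hm2
  have hTP : T ⊆ P := Finset.filter_subset _ _
  have hsplit : T.card * r + (P.card - T.card) * 2 ≤ ∑ x ∈ P, gp n P x := by
    rw [← Finset.sum_filter_add_sum_filter_not P (fun x => r ≤ gp n P x) (gp n P), ← hT]
    have hA : T.card * r ≤ ∑ x ∈ T, gp n P x := by
      simpa [mul_comm] using Finset.card_nsmul_le_sum T (gp n P) r
        (fun x hx => (Finset.mem_filter.mp hx).2)
    have hB : (P.filter (fun x => ¬ r ≤ gp n P x)).card * 2 ≤
        ∑ x ∈ P.filter (fun x => ¬ r ≤ gp n P x), gp n P x := by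
      simpa [mul_comm] using Finset.card_nsmul_le_sum (P.filter (fun x => ¬ r ≤ gp n P x))
        (gp n P) 2 (fun x hx => hgap2 x (Finset.filter_subset _ _ hx))
    have hcnt : T.card + (P.filter (fun x => ¬ r ≤ gp n P x)).card = P.card :=
      Finset.card_filter_add_card_filter_not _
    have : (P.filter (fun x => ¬ r ≤ gp n P x)).card = P.card - T.card := by omega
    rw [← this]
    omega
  have hkT : C.card ≤ T.card := Finset.card_le_card hCT
  have hTPc : T.card ≤ P.card := Finset.card_le_card hTP
  -- arithmetic
  have hfin : (T.card : ℤ) * r + ((P.card : ℤ) - T.card) * 2 ≤ (n : ℤ) := by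
    have := le_trans hsplit hsum
    zify [hTPc] at this
    linarith
  have hmkZ : (P.card : ℤ) + C.card = (Z1.card : ℤ) + Z2.card := by exact_mod_cast hmk
  have hT2Z : (2 : ℤ) ≤ T.card := by exact_mod_cast hT2
  have hkTZ : (C.card : ℤ) ≤ T.card := by exact_mod_cast hkT
  have hr4Z : (4 : ℤ) ≤ r := by exact_mod_cast hr4
  rcases le_or_gt (C.card : ℤ) 2 with hk | hk
  · nlinarith [mul_nonneg (sub_nonneg.mpr hT2Z) (sub_nonneg.mpr hr4Z)]
  · nlinarith [mul_nonneg (sub_nonneg.mpr hkTZ) (by linarith : (0:ℤ) ≤ (r:ℤ) - 2),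
      mul_nonneg (by linarith : (0:ℤ) ≤ (C.card:ℤ) - 2) (sub_nonneg.mpr hr4Z)]
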